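/- Every temporal graph whose snapshots are all bipartite admits a temporal 8-coloring; that is, the maximal temporal chromatic number of temporal graphs with bipartite snapshots is exactly 8. -/

import Mathlib

open SimpleGraph

/-- A coloring is proper for a graph if adjacent vertices get different colors. -/
def ProperColoring {V α : Type*} (H : SimpleGraph V) (c : V → α) : Prop :=
  ∀ u v, H.Adj u v → c u ≠ c v

/-- Two colorings are compatible for two consecutive snapshots if, for every edge of
either snapshot, the first coloring of one endpoint differs from the second coloring
of the other endpoint. -/
def Compatible {V α : Type*} (G G' : SimpleGraph V) (c c' : V → α) : Prop :=
  ∀ u v, (G ⊔ G').Adj u v → c u ≠ c' v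

/-- The union of the snapshots at times `i-1`, `i`, `i+1` (those that exist, with
snapshots indexed by `1,…,T`). -/
def Smash {V : Type*} (G : ℕ → SimpleGraph V) (T i : ℕ) : SimpleGraph V :=
  (if 2 ≤ i then G (i - 1) else ⊥) ⊔ G i ⊔ (if i < T then G (i + 1) else ⊥)

/-- A temporal coloring of a temporal graph with snapshots `G 1, …, G T`. -/
def TemporalColoring {V α : Type*} (T : ℕ) (G : ℕ → SimpleGraph V) (c : ℕ → V → α) : Prop :=
  (∀ i, 1 ≤ i → i ≤ T → ProperColoring (Smash G T i) (c i)) ∧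
  (∀ i, 1 ≤ i → i < T → Compatible (G i) (G (i + 1)) (c i) (c (i + 1)))

/-- The temporal chromatic number: the least `k` admitting a temporal `k`-coloring. -/
noncomputable def temporalChromaticNumber {V : Type*} (T : ℕ) (G : ℕ → SimpleGraph V) : ℕ :=
  sInf {k | ∃ c : ℕ → V → Fin k, TemporalColoring T G c}

/-- A graph is `d`-degenerate if every nonempty (finite) subgraph has a vertex of
degree at most `d`. -/
def Degenerate {V : Type*} (H : SimpleGraph V) (d : ℕ) : Prop :=
  ∀ s : Finset V, s.Nonempty → ∃ v ∈ s, ({u | u ∈ s ∧ H.Adj v u} : Set V).ncard ≤ d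

/-- A graph is `Δ`-bounded if every vertex has degree at most `Δ`. -/
def DegLE {V : Type*} (H : SimpleGraph V) (Δ : ℕ) : Prop :=
  ∀ v, (H.neighborSet v).ncard ≤ Δ

/-- Select the element of `{i-1, i, i+1}` congruent to `r` mod 3. -/
def pick (i r : ℕ) : ℕ :=
  if i % 3 = r then i else if (i + 1) % 3 = r then i + 1 else i - 1

lemma pick_self (i : ℕ) : pick i (i % 3) = i := by
  simp [pick]

lemma pick_succ (i : ℕ) : pick i ((i + 1) % 3) = i + 1 := by
  unfold pick
  have h1 : i % 3 ≠ (i + 1) % 3 := by omega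
  simp [h1]

lemma pick_pred (j : ℕ) : pick (j + 1) (j % 3) = j := by
  unfold pick
  have h1 : (j + 1) % 3 ≠ j % 3 := by omega
  have h2 : (j + 2) % 3 ≠ j % 3 := by omega
  simp [h1, h2]

/-- The universal upper bound: bipartite snapshots admit a temporal 8-coloring. -/
theorem upper_bound (V : Type) (T : ℕ) (G : ℕ → SimpleGraph V)
    (hcol : ∀ i, 1 ≤ i → i ≤ T → (G i).Colorable 2) :
    ∃ c : ℕ → V → Fin 8, TemporalColoring T G c := by
  have hb : ∀ i, ∃ b : V → Fin 2, 1 ≤ i → i ≤ T → ProperColoring (G i) b := by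
    intro i
    by_cases h : 1 ≤ i ∧ i ≤ T
    · obtain ⟨C⟩ := hcol i h.1 h.2
      exact ⟨C, fun _ _ u v huv => C.valid huv⟩
    · exact ⟨fun _ => 0, fun h1 h2 => absurd ⟨h1, h2⟩ h⟩
  choose b hbp using hb
  -- the coloring: combine the three relevant bipartitions, aligned by residue mod 3
  let enc : (Fin 3 → Fin 2) → Fin 8 :=
    fun f => Fin.cast (by norm_num) (finFunctionFinEquiv f)
  have henc : Function.Injective enc := by
    intro f g h
    exact finFunctionFinEquiv.injective (Fin.cast_injective _ h)
  let c : ℕ → V → Fin 8 := fun i v => enc (fun r => b (pick i r.val) v)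
  have key : ∀ i i' j (u v : V), pick i (j % 3) = j → pick i' (j % 3) = j →
      b j u ≠ b j v → c i u ≠ c i' v := by
    intro i i' j u v hi hi' hb hc
    have := henc hc
    have := congrFun this ⟨j % 3, by omega⟩
    simp only [hi, hi'] at this
    exact hb this
  refine ⟨c, ?_, ?_⟩
  · intro i h1 h2 u v hadj
    rcases hadj with (hadj | hadj) | hadj
    · split_ifs at hadj with h
      · -- edge of G (i-1)
        obtain ⟨j, rfl⟩ : ∃ j, i = j + 1 := ⟨i - 1, by omega⟩
        simp only [Nat.add_sub_cancel] at hadj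
        exact key (j+1) (j+1) j u v (pick_pred j) (pick_pred j)
          (hbp j (by omega) (by omega) u v hadj)
      · exact absurd hadj (by simp)
    · exact key i i i u v (pick_self i) (pick_self i) (hbp i h1 h2 u v hadj)
    · split_ifs at hadj with h
      · exact key i i (i+1) u v (pick_succ i) (pick_succ i)
          (hbp (i+1) (by omega) (by omega) u v hadj)
      · exact absurd hadj (by simp)
  · intro i h1 h2 u v hadj
    rcases hadj with hadj | hadj
    · exact key i (i+1) i u v (pick_self i) (pick_pred i)
        (hbp i h1 (by omega) u v hadj)
    · exact key i (i+1) (i+1) u v (pick_succ i) (pick_self (i+1))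
        (hbp (i+1) (by omega) (by omega) u v hadj)

/-- The complete bipartite graph on `Fin 8` split by bit `k`. -/
def bitG (k : ℕ) : SimpleGraph (Fin 8) where
  Adj u v := Nat.testBit u.val k ≠ Nat.testBit v.val k
  symm := ⟨fun u v h => h.symm⟩
  loopless := ⟨fun v h => h rfl⟩

lemma bitG_colorable (k : ℕ) : (bitG k).Colorable 2 :=
  ⟨⟨fun v => if Nat.testBit v.val k then 0 else 1, by
    intro u v h
    simp only [bitG] at h
    rcases Bool.eq_false_or_eq_true (Nat.testBit u.val k) with h1 | h1 <;>
      rcases Bool.eq_false_or_eq_true (Nat.testBit v.val k) with h2 | h2 <;>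
      simp_all⟩⟩

/-- Every temporal graph whose snapshots are all bipartite (2-colorable) admits a
temporal 8-coloring, and this is tight: there exists such a temporal graph with
temporal chromatic number exactly 8. -/
theorem statement9 :
    (∀ (V : Type) (T : ℕ) (G : ℕ → SimpleGraph V),
      (∀ i, 1 ≤ i → i ≤ T → (G i).Colorable 2) →
      ∃ c : ℕ → V → Fin 8, TemporalColoring T G c) ∧
    (∃ (G : ℕ → SimpleGraph (Fin 8)) (T : ℕ),
      (∀ i, 1 ≤ i → i ≤ T → (G i).Colorable 2) ∧
      temporalChromaticNumber T G = 8) := by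
  refine ⟨upper_bound, ?_⟩
  refine ⟨fun i => bitG (i - 1), 3, fun i _ _ => bitG_colorable (i - 1), ?_⟩
  have hcol : ∀ i, 1 ≤ i → i ≤ 3 → (bitG (i - 1)).Colorable 2 :=
    fun i _ _ => bitG_colorable (i - 1)
  have h8 : (8 : ℕ) ∈ {k | ∃ c : ℕ → Fin 8 → Fin k,
      TemporalColoring 3 (fun i => bitG (i - 1)) c} :=
    upper_bound (Fin 8) 3 _ hcol
  have hlb : ∀ k ∈ {k | ∃ c : ℕ → Fin 8 → Fin k,
      TemporalColoring 3 (fun i => bitG (i - 1)) c}, 8 ≤ k := by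
    intro k hk
    obtain ⟨c, hproper, _⟩ := hk
    have hinj : Function.Injective (c 2) := by
      intro u v huv
      by_contra hne
      have hadj : (Smash (fun i => bitG (i - 1)) 3 2).Adj u v := by
        have hd : ∀ x y : Fin 8, x ≠ y →
            x.val.testBit 0 ≠ y.val.testBit 0 ∨ x.val.testBit 1 ≠ y.val.testBit 1 ∨
              x.val.testBit 2 ≠ y.val.testBit 2 := by decide
        have hS : Smash (fun i => bitG (i - 1)) 3 2 = bitG 0 ⊔ bitG 1 ⊔ bitG 2 := by
          unfold Smash; norm_num
        rw [hS]
        rcases hd u v hne with h | h | h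
        · exact Or.inl (Or.inl h)
        · exact Or.inl (Or.inr h)
        · exact Or.inr h
      exact hproper 2 (by norm_num) (by norm_num) u v hadj huv
    have := Fintype.card_le_of_injective (c 2) hinj
    simpa using this
  exact le_antisymm (Nat.sInf_le h8) (le_csInf ⟨8, h8⟩ hlb)
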